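/- arXiv:1407.4780 — 7 statements merged into one kernel-verified Lean document; each statement's English description precedes it below -/
import Mathlib

section
/- Let N be even and H_N the N×N tridiagonal 0-1 adjacency matrix of the path graph. Then H_N is invertible and the entries of G = -H_N^{-1} are: G(r,s) = (-1)^{(r+s-1)/2} if r < s with r odd and s even, G(r,s) = (-1)^{(r+s-1)/2} if r > s with r even and s odd, and G(r,s) = 0 otherwise. -/
/-- The N×N path-graph adjacency (Hückel) matrix. -/
def pathH (N : ℕ) : Matrix (Fin N) (Fin N) ℝ :=
  fun i j => if i.val + 1 = j.val ∨ j.val + 1 = i.val then 1 else 0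

noncomputable def gf (r s : ℕ) : ℝ :=
  if (r < s ∧ Odd r ∧ Even s) ∨ (s < r ∧ Even r ∧ Odd s)
  then -(-1 : ℝ) ^ ((r + s - 1) / 2) else 0

noncomputable def Gm (N : ℕ) : Matrix (Fin N) (Fin N) ℝ :=
  fun i j => gf (i.val + 1) (j.val + 1)

lemma gf_zero (b : ℕ) : gf 0 b = 0 := by
  unfold gf; rw [if_neg]; simp only [Nat.odd_iff, Nat.even_iff]; omega

lemma gf_boundary (N b : ℕ) (hN : Even N) (hb : b ≤ N) : gf (N + 1) b = 0 := by
  unfold gf; rw [if_neg]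
  rw [Nat.even_iff] at hN
  simp only [Nat.odd_iff, Nat.even_iff]; omega

lemma L1 (a b : ℕ) (ha : 1 ≤ a) (hb : 1 ≤ b) :
    gf (a - 1) b + gf (a + 1) b = if a = b then 1 else 0 := by
  unfold gf
  simp only [Nat.odd_iff, Nat.even_iff]
  by_cases hab : a = b
  · rw [if_pos hab]
    split_ifs with h1 h2 h2 <;>
      first
        | (exfalso; omega)
        | (have hodd : ((a - 1 + b - 1) / 2) % 2 = 1 := by omega
           rw [Odd.neg_one_pow (Nat.odd_iff.2 hodd)]; ring)
        | (have hodd : ((a + b) / 2) % 2 = 1 := by omega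
           rw [Odd.neg_one_pow (Nat.odd_iff.2 hodd)]; ring)
        | (have hodd : ((a + 1 + b - 1) / 2) % 2 = 1 := by omega
           rw [Odd.neg_one_pow (Nat.odd_iff.2 hodd)]; ring)
  · rw [if_neg hab]
    split_ifs with h1 h2 h2 <;>
      first
        | (exfalso; omega)
        | (have he : (a + b) / 2 = (a - 1 + b - 1) / 2 + 1 := by omega
           rw [he, pow_succ]; ring)
        | (have he : (a + 1 + b - 1) / 2 = (a - 1 + b - 1) / 2 + 1 := by omega
           rw [he, pow_succ]; ring)
        | norm_num

lemma pathH_mul_Gm (N : ℕ) (hN : Even N) : pathH N * Gm N = 1 := by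
  ext i j
  rw [Matrix.mul_apply, Matrix.one_apply]
  have key : ∀ k : Fin N, pathH N i k * Gm N k j =
      (if (k : ℕ) = i.val + 1 then gf (i.val + 2) (j.val + 1) else 0)
    + (if (k : ℕ) + 1 = i.val then gf i.val (j.val + 1) else 0) := by
    intro k
    unfold pathH Gm
    by_cases h1 : i.val + 1 = k.val
    · rw [if_pos (Or.inl h1), if_pos h1.symm, if_neg (by omega), one_mul, add_zero]
      congr 1; omega
    · by_cases h2 : (k : ℕ) + 1 = i.val
      · rw [if_pos (Or.inr h2), if_neg (by omega), if_pos h2, one_mul, zero_add, ← h2]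
      · rw [if_neg (by omega), if_neg (by omega), if_neg h2, zero_mul, add_zero]
  rw [Finset.sum_congr rfl (fun k _ => key k), Finset.sum_add_distrib]
  have s1 : (∑ k : Fin N, if (k : ℕ) = i.val + 1 then gf (i.val + 2) (j.val + 1) else 0)
      = gf (i.val + 2) (j.val + 1) := by
    rw [Fin.sum_univ_eq_sum_range (fun n => if n = i.val + 1 then gf (i.val + 2) (j.val + 1) else 0)]
    rw [Finset.sum_ite_eq' (Finset.range N) (i.val + 1)]
    by_cases h : i.val + 1 ∈ Finset.range N
    · rw [if_pos h]
    · rw [if_neg h]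
      have hiN : i.val + 2 = N + 1 := by
        have := i.isLt
        simp only [Finset.mem_range] at h
        omega
      rw [hiN]
      exact (gf_boundary N _ hN (by have := j.isLt; omega)).symm
  have s2 : (∑ k : Fin N, if (k : ℕ) + 1 = i.val then gf i.val (j.val + 1) else 0)
      = gf i.val (j.val + 1) := by
    by_cases h0 : i.val = 0
    · rw [h0, gf_zero]
      apply Finset.sum_eq_zero
      intro k _
      rw [if_neg (by omega)]
    · have hcong : ∀ k : Fin N, (if (k : ℕ) + 1 = i.val then gf i.val (j.val + 1) else 0)
          = (if (k : ℕ) = i.val - 1 then gf i.val (j.val + 1) else 0) := by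
        intro k; exact if_congr (by omega) rfl rfl
      rw [Finset.sum_congr rfl (fun k _ => hcong k)]
      rw [Fin.sum_univ_eq_sum_range (fun n => if n = i.val - 1 then gf i.val (j.val + 1) else 0)]
      rw [Finset.sum_ite_eq' (Finset.range N) (i.val - 1)]
      rw [if_pos (Finset.mem_range.2 (by have := i.isLt; omega))]
  rw [s1, s2]
  have := L1 (i.val + 1) (j.val + 1) (by omega) (by omega)
  simp only [Nat.add_sub_cancel] at this
  rw [add_comm, this]
  have hij : i.val + 1 = j.val + 1 ↔ i = j := by
    rw [Fin.ext_iff]; omega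
  by_cases h : i = j
  · rw [if_pos (hij.2 h), if_pos h]
  · rw [if_neg (fun hh => h (hij.1 hh)), if_neg h]

theorem greens_function_pathH (N : ℕ) (hN : Even N) (hpos : 0 < N) :
    IsUnit (pathH N).det ∧
    ∀ r s : Fin N,
      -((pathH N)⁻¹ r s) =
        (if (r.val + 1 < s.val + 1 ∧ Odd (r.val + 1) ∧ Even (s.val + 1)) ∨
            (s.val + 1 < r.val + 1 ∧ Even (r.val + 1) ∧ Odd (s.val + 1))
         then (-1 : ℝ) ^ (((r.val + 1) + (s.val + 1) - 1) / 2) else 0) := by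
  have hmul := pathH_mul_Gm N hN
  refine ⟨Matrix.isUnit_det_of_right_inverse hmul, fun r s => ?_⟩
  rw [Matrix.inv_eq_right_inv hmul]
  show -(gf (r.val + 1) (s.val + 1)) = _
  unfold gf
  split_ifs with h
  · ring
  · ring
end

section
/- Let N be even, ω = π/(N+1). For integers r,s with 1 ≤ s < r ≤ N, r even and s odd, the sum -(1/(N+1)) · Σ_{k=1}^{N} sin(rkω)·sin(skω)/cos(kω) equals (-1)^{(r+s-1)/2}. -/
open Real Finset

lemma aux_sum_neg (m : ℕ) : ∑ j ∈ Icc 1 m, (-1:ℝ)^j = ((-1)^m - 1)/2 := by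
  induction m with
  | zero => simp
  | succ n ih =>
    rw [Finset.sum_Icc_succ_top (by omega), ih, pow_succ]; ring

lemma cheb (m : ℕ) (x : ℝ) :
    Real.cos ((2*(m:ℝ)+1)*x) =
      Real.cos x * ((-1:ℝ)^m * (1 + 2 * ∑ j ∈ Icc 1 m, (-1:ℝ)^j * Real.cos (2*(j:ℝ)*x))) := by
  induction m with
  | zero => simp
  | succ n ih =>
    rw [Finset.sum_Icc_succ_top (by omega)]
    push_cast
    have e1 : (2*((n:ℝ)+1)+1)*x = (2*(n:ℝ)+1)*x + (x+x) := by ring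
    have e2 : 2*((n:ℝ)+1)*x = (2*(n:ℝ)+1)*x + x := by ring
    rw [e1, e2, Real.cos_add, Real.cos_add, Real.cos_add, Real.sin_add]
    have hp := Real.sin_sq_add_cos_sq x
    have hA : (-1:ℝ)^n * (-1:ℝ)^n = 1 := by
      rw [← pow_add]; simp [pow_mul, Nat.two_mul]
    linear_combination -ih + (-(Real.cos ((2*(n:ℝ)+1)*x))) * hp +
      (-2*Real.cos ((2*(n:ℝ)+1)*x)*(Real.cos x)^2 +
        2*Real.sin ((2*(n:ℝ)+1)*x)*Real.sin x*Real.cos x) * hA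

lemma cos_ne (N : ℕ) (hN : Even N) (k : ℕ) : Real.cos ((k:ℝ) * (π/((N:ℝ)+1))) ≠ 0 := by
  intro h
  rw [Real.cos_eq_zero_iff] at h
  obtain ⟨n, hn⟩ := h
  have hπ : (π:ℝ) ≠ 0 := ne_of_gt Real.pi_pos
  have hN1 : ((N:ℝ)+1) ≠ 0 := by positivity
  have h2 : ((2*k : ℤ):ℝ) = (((2*n+1)*(N+1) : ℤ):ℝ) := by
    push_cast
    field_simp at hn
    have h' : (2*(k:ℝ))*π = ((2*(n:ℝ)+1)*((N:ℝ)+1))*π := by linear_combination π * hn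
    have := mul_right_cancel₀ hπ h'
    linarith
  have h3 : (2*k : ℤ) = (2*n+1)*(N+1) := by exact_mod_cast h2
  have hNodd : Odd ((N:ℤ)+1) := by
    obtain ⟨t, rfl⟩ := hN
    exact ⟨t, by push_cast; ring⟩
  have ho : Odd ((2*n+1)*((N:ℤ)+1)) := (odd_two_mul_add_one n).mul hNodd
  rw [← h3] at ho
  obtain ⟨u, hu⟩ := ho
  omega

lemma cos_sum (N j : ℕ) (hj1 : 1 ≤ j) (hjN : j ≤ N) :
    ∑ k ∈ Finset.Icc 1 N, Real.cos (2*(j:ℝ)*((k:ℝ)*(π/((N:ℝ)+1)))) = -1 := by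
  set θ : ℝ := 2*(j:ℝ)*(π/((N:ℝ)+1)) with hθ
  have hπ := Real.pi_pos
  have hN1 : (0:ℝ) < (N:ℝ)+1 := by positivity
  have hθpos : 0 < θ := by
    apply mul_pos
    · positivity
    · positivity
  have hcancel : (π/((N:ℝ)+1)) * ((N:ℝ)+1) = π := div_mul_cancel₀ _ (ne_of_gt hN1)
  have hjr : (j:ℝ) ≤ (N:ℝ) := by exact_mod_cast hjN
  have hfrac : 0 < π/((N:ℝ)+1) := by positivity
  have hθlt : θ < 2*π := by
    show 2*(j:ℝ)*(π/((N:ℝ)+1)) < 2*π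
    nlinarith
  set z : ℂ := Complex.exp (θ*Complex.I) with hz
  have hzpow : z ^ (N+1) = 1 := by
    rw [hz, ← Complex.exp_nat_mul]
    have : ((N:ℂ)+1) ≠ 0 := by exact_mod_cast (ne_of_gt hN1)
    have harg : ((N+1:ℕ):ℂ) * (↑θ*Complex.I) = (j:ℂ) * (2*(π:ℂ)*Complex.I) := by
      push_cast [hθ]
      field_simp
    rw [harg]
    exact_mod_cast Complex.exp_int_mul_two_pi_mul_I (j:ℤ)
  have hzne : z ≠ 1 := by
    intro h
    rw [hz, Complex.exp_eq_one_iff] at h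
    obtain ⟨n, hn⟩ := h
    have him := congrArg Complex.im hn
    simp [Complex.mul_im] at him
    have hn0 : (0:ℝ) < n := by
      by_contra hc
      push_neg at hc
      have : (n:ℝ) ≤ 0 := by exact_mod_cast hc
      nlinarith
    have hn1 : (n:ℝ) < 1 := by nlinarith
    have h5 : (0:ℤ) < n := by exact_mod_cast hn0
    have h6 : (n:ℤ) < 1 := by exact_mod_cast hn1
    omega
  have hgeom : ∑ k ∈ Finset.range (N+1), z^k = 0 := by
    rw [geom_sum_eq hzne, hzpow]; simp
  have hre : ∀ k : ℕ, Real.cos ((k:ℝ)*θ) = (z^k).re := by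
    intro k
    rw [hz, ← Complex.exp_nat_mul, show (k:ℂ)*(↑θ*Complex.I) = ((k*θ:ℝ):ℂ)*Complex.I by push_cast; ring,
      Complex.exp_ofReal_mul_I_re]
  have hsplit : Finset.range (N+1) = insert 0 (Finset.Icc 1 N) := by
    ext x; simp; omega
  have hsum0 : ∑ k ∈ Finset.range (N+1), Real.cos ((k:ℝ)*θ) = 0 := by
    calc ∑ k ∈ Finset.range (N+1), Real.cos ((k:ℝ)*θ) = ∑ k ∈ Finset.range (N+1), (z^k).re := by
          exact Finset.sum_congr rfl (fun k _ => hre k)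
      _ = (∑ k ∈ Finset.range (N+1), z^k).re := (Complex.re_sum _ _).symm
      _ = 0 := by rw [hgeom]; simp
  rw [hsplit, Finset.sum_insert (by simp)] at hsum0
  simp only [Nat.cast_zero, zero_mul, Real.cos_zero] at hsum0
  have heq : ∀ k ∈ Finset.Icc 1 N, Real.cos (2*(j:ℝ)*((k:ℝ)*(π/((N:ℝ)+1)))) = Real.cos ((k:ℝ)*θ) := by
    intro k _; rw [hθ]; ring_nf
  rw [Finset.sum_congr rfl heq]
  linarith

lemma sumP (N m : ℕ) (hm : m ≤ N) (hpos : 0 < N) :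
    ∑ k ∈ Icc 1 N, ((-1:ℝ)^m * (1 + 2 * ∑ j ∈ Icc 1 m,
        (-1:ℝ)^j * Real.cos (2*(j:ℝ)*((k:ℝ)*(π/((N:ℝ)+1))))))
      = (-1:ℝ)^m * N + (-1)^m - 1 := by
  have hA : (-1:ℝ)^m * (-1:ℝ)^m = 1 := by
    rw [← pow_add]; simp [pow_mul, Nat.two_mul]
  rw [← Finset.mul_sum, Finset.sum_add_distrib, Finset.sum_const, ← Finset.mul_sum,
    Finset.sum_comm]
  have hinner : ∀ j ∈ Icc 1 m,
      ∑ k ∈ Icc 1 N, (-1:ℝ)^j * Real.cos (2*(j:ℝ)*((k:ℝ)*(π/((N:ℝ)+1)))) = -(-1:ℝ)^j := by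
    intro j hj
    simp only [Finset.mem_Icc] at hj
    rw [← Finset.mul_sum, cos_sum N j hj.1 (le_trans hj.2 hm)]
    ring
  rw [Finset.sum_congr rfl hinner]
  have : ∑ j ∈ Icc 1 m, -(-1:ℝ)^j = -(((-1:ℝ)^m - 1)/2) := by
    rw [Finset.sum_neg_distrib, aux_sum_neg]
  rw [this, Nat.card_Icc]
  simp only [Nat.add_sub_cancel, nsmul_eq_mul]
  linear_combination -hA

theorem greens_sum_closed_form (N : ℕ) (hN : Even N) (hpos : 0 < N)
    (r s : ℕ) (hs : 1 ≤ s) (hsr : s < r) (hr : r ≤ N)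
    (hre : Even r) (hso : Odd s) :
    -(1 / (N + 1 : ℝ)) *
      ∑ k ∈ Finset.Icc 1 N,
        Real.sin (r * k * (π / (N + 1))) * Real.sin (s * k * (π / (N + 1))) /
          Real.cos (k * (π / (N + 1)))
      = (-1 : ℝ) ^ ((r + s - 1) / 2) := by
  obtain ⟨u, hu⟩ := hre
  obtain ⟨v, hv⟩ := hso
  set m1 := (r - s - 1)/2 with hm1def
  set m2 := (r + s - 1)/2 with hm2def
  have hm1 : 2*m1 + 1 + s = r := by omega
  have hm2 : 2*m2 + 1 = r + s := by omega
  have hm21 : m2 = m1 + s := by omega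
  have hm2N : m2 ≤ N := by omega
  have hm1N : m1 ≤ N := by omega
  have hstep : ∀ k ∈ Finset.Icc 1 N,
      Real.sin (r * k * (π / ((N:ℝ) + 1))) * Real.sin (s * k * (π / ((N:ℝ) + 1))) /
          Real.cos (k * (π / ((N:ℝ) + 1)))
      = (((-1:ℝ)^m1 * (1 + 2*∑ j ∈ Icc 1 m1, (-1:ℝ)^j * Real.cos (2*(j:ℝ)*((k:ℝ)*(π/((N:ℝ)+1))))))
         - ((-1:ℝ)^m2 * (1 + 2*∑ j ∈ Icc 1 m2, (-1:ℝ)^j * Real.cos (2*(j:ℝ)*((k:ℝ)*(π/((N:ℝ)+1))))))) / 2 := by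
    intro k hk
    have hc := cos_ne N hN k
    have hr1 : (r:ℝ) = 2*(m1:ℝ)+1+(s:ℝ) := by exact_mod_cast congrArg (Nat.cast : ℕ → ℝ) hm1.symm
    have hr2 : (r:ℝ)+(s:ℝ) = 2*(m2:ℝ)+1 := by exact_mod_cast congrArg (Nat.cast : ℕ → ℝ) hm2.symm
    have e1 : (2*(m1:ℝ)+1)*((k:ℝ)*(π/((N:ℝ)+1)))
        = (r:ℝ)*k*(π/((N:ℝ)+1)) - (s:ℝ)*k*(π/((N:ℝ)+1)) := by
      rw [hr1]; ring
    have e2 : (2*(m2:ℝ)+1)*((k:ℝ)*(π/((N:ℝ)+1)))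
        = (r:ℝ)*k*(π/((N:ℝ)+1)) + (s:ℝ)*k*(π/((N:ℝ)+1)) := by
      rw [← hr2]; ring
    have hprod : Real.sin ((r:ℝ)*k*(π/((N:ℝ)+1))) * Real.sin ((s:ℝ)*k*(π/((N:ℝ)+1)))
        = (Real.cos ((2*(m1:ℝ)+1)*((k:ℝ)*(π/((N:ℝ)+1))))
          - Real.cos ((2*(m2:ℝ)+1)*((k:ℝ)*(π/((N:ℝ)+1)))))/2 := by
      rw [e1, e2, Real.cos_sub, Real.cos_add]
      ring
    have key : ∀ a b c : ℝ, c ≠ 0 → (c*a - c*b)/2/c = (a-b)/2 := by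
      intro a b c hc; field_simp
    rw [hprod, cheb m1 ((k:ℝ)*(π/((N:ℝ)+1))), cheb m2 ((k:ℝ)*(π/((N:ℝ)+1)))]
    exact key _ _ _ hc
  rw [Finset.sum_congr rfl hstep]
  rw [← Finset.sum_div, Finset.sum_sub_distrib]
  rw [sumP N m1 hm1N hpos, sumP N m2 hm2N hpos]
  have hsign : (-1:ℝ)^m2 = -(-1:ℝ)^m1 := by
    rw [hm21, pow_add]
    have : (-1:ℝ)^s = -1 := Odd.neg_one_pow ⟨v, hv⟩
    rw [this]; ring
  have hN1 : ((N:ℝ)+1) ≠ 0 := by positivity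
  rw [hsign]
  field_simp
  ring
end

section
/- Let N be even, ω = π/(N+1). For integers r,s with 1 ≤ r,s ≤ N of the same parity, Σ_{k=1}^{N} sin(rkω)·sin(skω)/cos(kω) = 0. -/
open Real Finset

theorem greens_sum_same_parity_zero (N : ℕ) (hN : Even N) (hpos : 0 < N)
    (r s : ℕ) (hr1 : 1 ≤ r) (hrN : r ≤ N) (hs1 : 1 ≤ s) (hsN : s ≤ N)
    (hpar : (Odd r ∧ Odd s) ∨ (Even r ∧ Even s)) :
    ∑ k ∈ Finset.Icc 1 N,
      Real.sin (r * k * (π / (N + 1))) * Real.sin (s * k * (π / (N + 1))) /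
        Real.cos (k * (π / (N + 1))) = 0 := by
  have hrs : ((-1 : ℝ)) ^ r * (-1) ^ s = 1 := by
    rcases hpar with ⟨hr, hs⟩ | ⟨hr, hs⟩
    · rw [hr.neg_one_pow, hs.neg_one_pow]; ring
    · rw [hr.neg_one_pow, hs.neg_one_pow]; ring
  have hmem : ∀ a ∈ Finset.Icc 1 N, N + 1 - a ∈ Finset.Icc 1 N := by
    intro a ha
    simp only [Finset.mem_Icc] at ha ⊢
    omega
  apply Finset.sum_involution (fun k _ => N + 1 - k) ?_ ?_ hmem ?_
  · intro k hk
    simp only [Finset.mem_Icc] at hk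
    have hNpos : ((N : ℝ) + 1) ≠ 0 := by positivity
    have hc : ((N + 1 - k : ℕ) : ℝ) = (N : ℝ) + 1 - k := by
      push_cast [Nat.cast_sub (by omega : k ≤ N + 1)]; ring
    have key : ∀ m : ℕ, (m : ℝ) * ((N + 1 - k : ℕ) : ℝ) * (π / (N + 1))
        = (m : ℝ) * π - (m : ℝ) * k * (π / (N + 1)) := by
      intro m
      rw [hc]
      field_simp
    have key1 : ((N + 1 - k : ℕ) : ℝ) * (π / (N + 1))
        = ((1 : ℕ) : ℝ) * π - (k : ℝ) * (π / (N + 1)) := by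
      have := key 1
      simpa using this
    rw [key r, key s, key1, Real.sin_nat_mul_pi_sub, Real.sin_nat_mul_pi_sub,
      Real.cos_nat_mul_pi_sub]
    have num : (-((-1 : ℝ) ^ r * Real.sin (r * k * (π / (N + 1))))) *
        (-((-1 : ℝ) ^ s * Real.sin (s * k * (π / (N + 1))))) =
        Real.sin (r * k * (π / (N + 1))) * Real.sin (s * k * (π / (N + 1))) := by
      linear_combination (Real.sin (r * k * (π / (N + 1))) *
        Real.sin (s * k * (π / (N + 1)))) * hrs
    rw [num]
    rw [pow_one, neg_one_mul, div_neg]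
    ring
  · intro k hk _
    simp only [Finset.mem_Icc] at hk
    rcases hN with ⟨m, hm⟩
    omega
  · intro k hk
    simp only [Finset.mem_Icc] at hk
    omega
end

section
/- Let N ≡ 1 (mod 4), N ≥ 5, and H^c_N the adjacency matrix of the N-cycle. Then H^c_N is invertible and the first column (x_0, x_1, …, x_{N-1}) of (H^c_N)^{-1} is given by x_j = (1/2)·c_{j mod 4} where (c_0,c_1,c_2,c_3) = (1,1,-1,-1). -/
noncomputable def cc (m : ℕ) : ℝ :=
  if m % 4 = 0 then 1 else if m % 4 = 1 then 1 else if m % 4 = 2 then -1 else -1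

lemma cc_add_two (m : ℕ) : cc (m + 2) = - cc m := by
  unfold cc
  have h : m % 4 = 0 ∨ m % 4 = 1 ∨ m % 4 = 2 ∨ m % 4 = 3 := by omega
  rcases h with h | h | h | h <;>
    · have h2 : (m + 2) % 4 = (m % 4 + 2) % 4 := by omega
      rw [h2, h]; norm_num

lemma mod2' (N x : ℕ) (h : x < 2 * N) (h0 : 0 < N) : x % N = x ∨ x % N + N = x := by
  rcases lt_or_ge x N with h1 | h1
  · left; exact Nat.mod_eq_of_lt h1
  · right
    have hx : x % N = x - N := by
      conv_lhs => rw [show x = x - N + N by omega]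
      rw [Nat.add_mod_right, Nat.mod_eq_of_lt (by omega)]
    omega

lemma key (N d : ℕ) (hmod : N % 4 = 1) (hN : 5 ≤ N) (hd : d < N) :
    cc ((d + 1) % N) + cc ((d + N - 1) % N) = if d = 0 then 2 else 0 := by
  rcases eq_or_ne d 0 with rfl | hd0
  · rw [if_pos rfl]
    rw [Nat.mod_eq_of_lt (by omega : 1 < N), Nat.mod_eq_of_lt (by omega : 0 + N - 1 < N)]
    unfold cc
    rw [show 1 % 4 = 1 by norm_num, show (0 + N - 1) % 4 = 0 by omega]
    norm_num
  · rw [if_neg hd0]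
    rcases eq_or_ne d (N - 1) with rfl | hd1
    · rw [show (N - 1 + 1) % N = 0 by rw [show N - 1 + 1 = N by omega]; exact Nat.mod_self N,
        show (N - 1 + N - 1) % N = N - 2 by
          rw [show N - 1 + N - 1 = (N - 2) + N by omega, Nat.add_mod_right,
            Nat.mod_eq_of_lt (by omega)]]
      unfold cc
      rw [show (0 : ℕ) % 4 = 0 by norm_num, show (N - 2) % 4 = 3 by omega]
      norm_num
    · rw [Nat.mod_eq_of_lt (by omega : d + 1 < N),
        show (d + N - 1) % N = d - 1 by
          rw [show d + N - 1 = (d - 1) + N by omega, Nat.add_mod_right,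
            Nat.mod_eq_of_lt (by omega)],
        show d + 1 = (d - 1) + 2 by omega, cc_add_two]
      ring

lemma bridge1 (N i k : ℕ) (hN : 5 ≤ N) (hi : i < N) (hk : k < N) :
    ((i + 1) % N + N - k) % N = ((i + N - k) % N + 1) % N := by
  have hN0 : 0 < N := by omega
  have ha := mod2' N (i + 1) (by omega) hN0
  have hal : (i + 1) % N < N := Nat.mod_lt _ hN0
  have hd := mod2' N (i + N - k) (by omega) hN0
  have hdl : (i + N - k) % N < N := Nat.mod_lt _ hN0
  have he := mod2' N ((i + 1) % N + N - k) (by omega) hN0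
  have hel : ((i + 1) % N + N - k) % N < N := Nat.mod_lt _ hN0
  have hf := mod2' N ((i + N - k) % N + 1) (by omega) hN0
  have hfl : ((i + N - k) % N + 1) % N < N := Nat.mod_lt _ hN0
  omega

lemma bridge2 (N i k : ℕ) (hN : 5 ≤ N) (hi : i < N) (hk : k < N) :
    ((i + N - 1) % N + N - k) % N = ((i + N - k) % N + N - 1) % N := by
  have hN0 : 0 < N := by omega
  have ha := mod2' N (i + N - 1) (by omega) hN0
  have hal : (i + N - 1) % N < N := Nat.mod_lt _ hN0
  have hd := mod2' N (i + N - k) (by omega) hN0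
  have hdl : (i + N - k) % N < N := Nat.mod_lt _ hN0
  have he := mod2' N ((i + N - 1) % N + N - k) (by omega) hN0
  have hel : ((i + N - 1) % N + N - k) % N < N := Nat.mod_lt _ hN0
  have hf := mod2' N ((i + N - k) % N + N - 1) (by omega) hN0
  have hfl : ((i + N - k) % N + N - 1) % N < N := Nat.mod_lt _ hN0
  omega


/-- The N×N cycle-graph adjacency (cyclic Hückel) matrix. -/
def cycleH (N : ℕ) : Matrix (Fin N) (Fin N) ℝ :=
  fun i j => if (i.val + 1) % N = j.val ∨ (j.val + 1) % N = i.val then 1 else 0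

theorem inv_cycleH_mod4_1 (N : ℕ) (hmod : N % 4 = 1) (hN : 5 ≤ N) :
    IsUnit (cycleH N).det ∧
    ∀ j : Fin N, (cycleH N)⁻¹ j ⟨0, by omega⟩ =
      (1 / 2 : ℝ) * (if j.val % 4 = 0 then 1 else if j.val % 4 = 1 then 1
                     else if j.val % 4 = 2 then (-1) else (-1)) := by
  have hN0 : 0 < N := by omega
  set B : Matrix (Fin N) (Fin N) ℝ :=
    fun j k => (1 / 2 : ℝ) * cc ((j.val + N - k.val) % N) with hB
  have hright : cycleH N * B = 1 := by
    ext i k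
    rw [Matrix.mul_apply, Matrix.one_apply]
    obtain ⟨a, hav⟩ : ∃ a : Fin N, a.val = (i.val + 1) % N :=
      ⟨⟨_, Nat.mod_lt _ hN0⟩, rfl⟩
    obtain ⟨b, hbv⟩ : ∃ b : Fin N, b.val = (i.val + N - 1) % N :=
      ⟨⟨_, Nat.mod_lt _ hN0⟩, rfl⟩
    have h1 := mod2' N (i.val + 1) (by omega) hN0
    have h3 := mod2' N (i.val + N - 1) (by omega) hN0
    have hb1 : (i.val + 1) % N < N := Nat.mod_lt _ hN0
    have hb3 : (i.val + N - 1) % N < N := Nat.mod_lt _ hN0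
    have hil := i.isLt
    have hkl := k.isLt
    have hab : a ≠ b := by
      simp only [ne_eq, Fin.ext_iff, hav, hbv]
      omega
    have step : ∀ j : Fin N, cycleH N i j * B j k =
        (if a = j then B a k else 0) + (if b = j then B b k else 0) := by
      intro j
      have h2 := mod2' N (j.val + 1) (by omega) hN0
      have hb2 : (j.val + 1) % N < N := Nat.mod_lt _ hN0
      have hiff : ((i.val + 1) % N = j.val ∨ (j.val + 1) % N = i.val) ↔ (a = j ∨ b = j) := by
        simp only [Fin.ext_iff, hav, hbv]
        have := j.isLt
        omega
      by_cases hc : (i.val + 1) % N = j.val ∨ (j.val + 1) % N = i.val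
      · rcases hiff.mp hc with h | h
        · rw [← h] at hc ⊢
          rw [if_pos rfl, if_neg (Ne.symm hab)]
          show (if (i.val + 1) % N = a.val ∨ (a.val + 1) % N = i.val then (1:ℝ) else 0)
              * B a k = B a k + 0
          rw [if_pos hc]; ring
        · rw [← h] at hc ⊢
          rw [if_neg hab, if_pos rfl]
          show (if (i.val + 1) % N = b.val ∨ (b.val + 1) % N = i.val then (1:ℝ) else 0)
              * B b k = 0 + B b k
          rw [if_pos hc]; ring
      · have h4 : ¬ (a = j ∨ b = j) := fun h => hc (hiff.mpr h)
        push_neg at h4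
        rw [if_neg h4.1, if_neg h4.2]
        show (if (i.val + 1) % N = j.val ∨ (j.val + 1) % N = i.val then (1:ℝ) else 0)
            * B j k = 0 + 0
        rw [if_neg hc]; ring
    rw [Finset.sum_congr rfl (fun j _ => step j), Finset.sum_add_distrib,
      Finset.sum_ite_eq, Finset.sum_ite_eq]
    simp only [Finset.mem_univ, if_true, hB]
    rw [hav, hbv]
    rw [bridge1 N i.val k.val hN i.isLt k.isLt, bridge2 N i.val k.val hN i.isLt k.isLt]
    have hkey := key N ((i.val + N - k.val) % N) hmod hN (Nat.mod_lt _ hN0)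
    have hd := mod2' N (i.val + N - k.val) (by omega) hN0
    have hdl : (i.val + N - k.val) % N < N := Nat.mod_lt _ hN0
    by_cases hik : i = k
    · have h0 : (i.val + N - k.val) % N = 0 := by
        have : i.val = k.val := by rw [hik]
        omega
      rw [if_pos hik, h0]
      rw [h0] at hkey
      norm_num at hkey ⊢
      linarith
    · have h0 : (i.val + N - k.val) % N ≠ 0 := by
        have : i.val ≠ k.val := fun h => hik (Fin.ext h)
        omega
      rw [if_neg hik]
      rw [if_neg h0] at hkey
      linarith
  refine ⟨Matrix.isUnit_det_of_right_inverse hright, ?_⟩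
  intro j
  rw [Matrix.inv_eq_right_inv hright]
  simp only [hB]
  rw [show (j.val + N - (0 : ℕ)) % N = j.val by
    rw [Nat.sub_zero, Nat.add_mod_right, Nat.mod_eq_of_lt j.isLt]]
  rfl
end

section
/- Let N ≡ 2 (mod 4), N ≥ 6, and H^c_N the adjacency matrix of the N-cycle. Then H^c_N is invertible and the first column (x_0, …, x_{N-1}) of (H^c_N)^{-1} satisfies x_j = (1/2)·c_{j mod 4} where (c_0,c_1,c_2,c_3) = (0,1,0,-1). -/
noncomputable def c4 : ℕ → ℝ := fun m =>
  if m % 4 = 0 then 0 else if m % 4 = 1 then 1/2 else if m % 4 = 2 then 0 else -(1/2)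

noncomputable def Binv (N : ℕ) : Matrix (Fin N) (Fin N) ℝ :=
  fun i k => c4 ((i.val + (N - k.val)) % N)

lemma c4_key (N : ℕ) (hmod : N % 4 = 2) (hN : 6 ≤ N) (d : ℕ) (hd : d < N) :
    c4 ((d + 1) % N) + c4 ((d + (N - 1)) % N) = if d = 0 then 1 else 0 := by
  by_cases h0 : d = 0
  · subst h0
    rw [Nat.mod_eq_of_lt (by omega), show (0 + (N-1)) % N = N - 1 by
      rw [Nat.zero_add, Nat.mod_eq_of_lt (by omega)]]
    simp only [c4]
    rw [show 1 % 4 = 1 from rfl, show (N-1) % 4 = 1 from by omega]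
    norm_num
  · by_cases hN1 : d = N - 1
    · subst hN1
      rw [show (N - 1 + 1) % N = 0 by rw [show N - 1 + 1 = N by omega, Nat.mod_self],
          show (N - 1 + (N - 1)) % N = N - 2 by
            rw [show N - 1 + (N - 1) = (N - 2) + N by omega, Nat.add_mod_right,
               Nat.mod_eq_of_lt (by omega)], if_neg h0]
      simp only [c4]
      rw [show 0 % 4 = 0 from rfl, show (N-2) % 4 = 0 from by omega]
      norm_num
    · -- interior: 1 ≤ d ≤ N-2
      rw [Nat.mod_eq_of_lt (by omega),
          show (d + (N - 1)) % N = d - 1 by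
            rw [show d + (N - 1) = (d - 1) + N by omega, Nat.add_mod_right,
               Nat.mod_eq_of_lt (by omega)]]
      have h4 : d % 4 = 0 ∨ d % 4 = 1 ∨ d % 4 = 2 ∨ d % 4 = 3 := by omega
      simp only [if_neg h0]
      rcases h4 with h | h | h | h
      · simp only [c4]
        rw [show (d+1)%4 = 1 from by omega, show (d-1)%4 = 3 from by omega]; norm_num
      · simp only [c4]
        rw [show (d+1)%4 = 2 from by omega, show (d-1)%4 = 0 from by omega]; norm_num
      · simp only [c4]
        rw [show (d+1)%4 = 3 from by omega, show (d-1)%4 = 1 from by omega]; norm_num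
      · simp only [c4]
        rw [show (d+1)%4 = 0 from by omega, show (d-1)%4 = 2 from by omega]; norm_num

lemma HB (N : ℕ) (hmod : N % 4 = 2) (hN : 6 ≤ N) : cycleH N * Binv N = 1 := by
  ext i k
  rw [Matrix.mul_apply, Matrix.one_apply]
  have hN0 : 0 < N := by omega
  have hi := i.isLt
  have hk := k.isLt
  set a : Fin N := ⟨(i.val + 1) % N, Nat.mod_lt _ hN0⟩ with ha_def
  set b : Fin N := ⟨(i.val + (N - 1)) % N, Nat.mod_lt _ hN0⟩ with hb_def
  have hsucc : ∀ x : ℕ, x < N → (x + 1) % N = if x + 1 = N then 0 else x + 1 := by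
    intro x hx
    split
    · next h => rw [h, Nat.mod_self]
    · exact Nat.mod_eq_of_lt (by omega)
  have hbval : b.val = if i.val = 0 then N - 1 else i.val - 1 := by
    rw [hb_def]
    split
    · next h => simp only [h, Nat.zero_add]; exact Nat.mod_eq_of_lt (by omega)
    · next h =>
      show (i.val + (N-1)) % N = _
      rw [show i.val + (N - 1) = (i.val - 1) + N by omega, Nat.add_mod_right,
         Nat.mod_eq_of_lt (by omega)]
  have hab : a ≠ b := by
    intro h
    have hv2 : (i.val + 1) % N = b.val := congrArg Fin.val h
    rw [hbval, hsucc i.val hi] at hv2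
    split_ifs at hv2 <;> omega
  have hH : ∀ j : Fin N, cycleH N i j
      = (if j = a then (1:ℝ) else 0) + (if j = b then 1 else 0) := by
    intro j
    have hj := j.isLt
    have hiff : ((i.val + 1) % N = j.val ∨ (j.val + 1) % N = i.val) ↔ (j = a ∨ j = b) := by
      rw [Fin.ext_iff, Fin.ext_iff, ha_def, hbval]
      show _ ↔ (j.val = (i.val + 1) % N ∨ _)
      rw [hsucc i.val hi, hsucc j.val hj]
      constructor <;> intro h <;> split_ifs at h ⊢ <;> omega
    show (if _ then (1:ℝ) else 0) = _
    rw [if_congr hiff rfl rfl]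
    by_cases h1 : j = a <;> by_cases h2 : j = b
    · exact absurd (h1.symm.trans h2) hab
    · simp [h1, h2, hab]
    · simp [h1, h2, Ne.symm hab]
    · simp [h1, h2]
  simp only [hH, add_mul, ite_mul, one_mul, zero_mul, Finset.sum_add_distrib,
    Finset.sum_ite_eq', Finset.mem_univ, if_true]
  show Binv N a k + Binv N b k = _
  have hd : (i.val + (N - k.val)) % N < N := Nat.mod_lt _ hN0
  have e1 : (a.val + (N - k.val)) % N = ((i.val + (N - k.val)) % N + 1) % N := by
    rw [ha_def]
    show ((i.val + 1) % N + (N - k.val)) % N = _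
    rw [Nat.mod_add_mod, Nat.mod_add_mod]
    congr 1
    omega
  have e2 : (b.val + (N - k.val)) % N = ((i.val + (N - k.val)) % N + (N - 1)) % N := by
    rw [hb_def]
    show ((i.val + (N - 1)) % N + (N - k.val)) % N = _
    rw [Nat.mod_add_mod, Nat.mod_add_mod]
    congr 1
    omega
  show c4 ((a.val + (N - k.val)) % N) + c4 ((b.val + (N - k.val)) % N) = _
  rw [e1, e2, c4_key N hmod hN _ hd]
  have hiffk : (i.val + (N - k.val)) % N = 0 ↔ i = k := by
    rw [Fin.ext_iff]
    constructor
    · intro h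
      rcases Nat.lt_or_ge (i.val + (N - k.val)) N with hlt | hge
      · rw [Nat.mod_eq_of_lt hlt] at h; omega
      · rw [show i.val + (N - k.val) = (i.val - k.val) + N by omega, Nat.add_mod_right,
           Nat.mod_eq_of_lt (by omega)] at h
        omega
    · intro h
      rw [show i.val + (N - k.val) = 0 + N by omega, Nat.add_mod_right, Nat.zero_mod]
  by_cases h : i = k
  · rw [if_pos (hiffk.mpr h), if_pos h]
  · rw [if_neg (fun hh => h (hiffk.mp hh)), if_neg h]


theorem inv_cycleH_mod4_2 (N : ℕ) (hmod : N % 4 = 2) (hN : 6 ≤ N) :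
    IsUnit (cycleH N).det ∧
    ∀ j : Fin N, (cycleH N)⁻¹ j ⟨0, by omega⟩ =
      (1 / 2 : ℝ) * (if j.val % 4 = 0 then 0 else if j.val % 4 = 1 then 1
                     else if j.val % 4 = 2 then 0 else (-1)) := by
  have hHB := HB N hmod hN
  refine ⟨Matrix.isUnit_det_of_right_inverse hHB, ?_⟩
  intro j
  rw [Matrix.inv_eq_right_inv hHB]
  show c4 ((j.val + (N - 0)) % N) = _
  have hv : (j.val + (N - 0)) % N = j.val := by
    rw [Nat.sub_zero, Nat.add_mod_right, Nat.mod_eq_of_lt j.isLt]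
  rw [hv]
  have h4 : j.val % 4 = 0 ∨ j.val % 4 = 1 ∨ j.val % 4 = 2 ∨ j.val % 4 = 3 := by omega
  rcases h4 with h | h | h | h <;> simp [c4, h]
end

section
/- Let N ≡ 3 (mod 4), and H^c_N the adjacency matrix of the N-cycle. Then H^c_N is invertible and the first column (x_0, …, x_{N-1}) of (H^c_N)^{-1} satisfies x_j = (1/2)·c_{j mod 4} where (c_0,c_1,c_2,c_3) = (-1,1,1,-1). -/
lemma modfact (N x : ℕ) (h : x < 2*N) :
    (x < N ∧ x % N = x) ∨ (N ≤ x ∧ x % N = x - N) := by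
  rcases Nat.lt_or_ge x N with h1 | h1
  · exact Or.inl ⟨h1, Nat.mod_eq_of_lt h1⟩
  · right
    refine ⟨h1, ?_⟩
    rw [Nat.mod_eq_sub_mod h1]
    exact Nat.mod_eq_of_lt (by omega)

noncomputable def cf (m : ℕ) : ℝ :=
  if m % 4 = 0 then (-1) else if m % 4 = 1 then 1 else if m % 4 = 2 then 1 else (-1)

noncomputable def cycB (N : ℕ) : Matrix (Fin N) (Fin N) ℝ :=
  fun i j => (1/2 : ℝ) * cf ((i.val + N - j.val) % N)

lemma cf_key (N d : ℕ) (h3 : N % 4 = 3) (hN : 3 ≤ N) (hd : d < N) :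
    cf ((d+1) % N) + cf ((d + N - 1) % N) = if d = 0 then 2 else 0 := by
  have m1 := modfact N (d+1) (by omega)
  have m2 := modfact N (d + N - 1) (by omega)
  rcases Nat.lt_or_ge d (N-1) with h | h
  · rcases Nat.eq_zero_or_pos d with h0 | h0
    · subst h0
      have e1 : (0+1) % N = 1 := by omega
      have e2 : (0 + N - 1) % N = N - 1 := by omega
      have e3 : (N-1) % 4 = 2 := by omega
      rw [e1, e2, if_pos rfl]
      simp only [cf, e3]
      norm_num
    · have e1 : (d+1) % N = d + 1 := by omega
      have e2 : (d + N - 1) % N = d - 1 := by omega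
      rw [e1, e2, if_neg (by omega)]
      have h4 : d % 4 = 0 ∨ d % 4 = 1 ∨ d % 4 = 2 ∨ d % 4 = 3 := by omega
      rcases h4 with h4 | h4 | h4 | h4 <;>
        · have a1 : (d+1) % 4 = (d % 4 + 1) % 4 := by omega
          have a2 : (d-1) % 4 = (d % 4 + 3) % 4 := by omega
          rw [h4] at a1 a2
          norm_num at a1 a2
          simp only [cf, a1, a2]
          norm_num
  · have hd1 : d = N - 1 := by omega
    subst hd1
    have e1 : (N - 1 + 1) % N = 0 := by omega
    have e2 : (N - 1 + N - 1) % N = N - 2 := by omega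
    have e3 : (N-2) % 4 = 1 := by omega
    rw [e1, e2, if_neg (by omega)]
    simp only [cf, e3]
    norm_num

lemma e1gen (N i j : ℕ) (hi : i < N) (hj : j < N) (hN : 3 ≤ N) :
    ((i + 1) % N + N - j) % N = ((i + N - j) % N + 1) % N := by
  have ma := modfact N (i + 1) (by omega)
  have md := modfact N (i + N - j) (by omega)
  have me1 := modfact N ((i + 1) % N + N - j) (by omega)
  have mf1 := modfact N ((i + N - j) % N + 1) (by omega)
  omega

lemma e2gen (N i j : ℕ) (hi : i < N) (hj : j < N) (hN : 3 ≤ N) :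
    ((i + N - 1) % N + N - j) % N = ((i + N - j) % N + N - 1) % N := by
  have mb := modfact N (i + N - 1) (by omega)
  have md := modfact N (i + N - j) (by omega)
  have me2 := modfact N ((i + N - 1) % N + N - j) (by omega)
  have mf2 := modfact N ((i + N - j) % N + N - 1) (by omega)
  omega

lemma cyc_mul_eq_one (N : ℕ) (h3 : N % 4 = 3) (hN : 3 ≤ N) :
    cycleH N * cycB N = 1 := by
  ext i j
  have hNpos : 0 < N := by omega
  have hi := i.isLt; have hj := j.isLt
  set a : Fin N := ⟨(i.val + 1) % N, Nat.mod_lt _ hNpos⟩ with ha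
  set b : Fin N := ⟨(i.val + N - 1) % N, Nat.mod_lt _ hNpos⟩ with hb
  have hav : a.val = (i.val + 1) % N := rfl
  have hbv : b.val = (i.val + N - 1) % N := rfl
  have ma := modfact N (i.val + 1) (by omega)
  have mb := modfact N (i.val + N - 1) (by omega)
  have hab : a ≠ b := by
    rw [Fin.ne_iff_vne, hav, hbv]
    omega
  have hrow : ∀ k : Fin N, cycleH N i k * cycB N k j =
      (if k = a then cycB N a j else 0) + (if k = b then cycB N b j else 0) := by
    intro k
    have hk := k.isLt
    have mk := modfact N (k.val + 1) (by omega)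
    have hcond : ((i.val + 1) % N = k.val ∨ (k.val + 1) % N = i.val) ↔ (k = a ∨ k = b) := by
      simp only [Fin.ext_iff, hav, hbv]
      constructor
      · rintro (h | h)
        · left; omega
        · right; omega
      · rintro (h | h)
        · left; omega
        · right; omega
    rw [cycleH]
    by_cases h1 : k = a
    · subst h1
      rw [if_pos (hcond.mpr (Or.inl rfl)), if_pos rfl, if_neg hab, one_mul, add_zero]
    · by_cases h2 : k = b
      · subst h2
        rw [if_pos (hcond.mpr (Or.inr rfl)), if_neg h1, if_pos rfl, one_mul, zero_add]
      · rw [if_neg (fun hc => by rcases hcond.mp hc with h | h; exacts [h1 h, h2 h]),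
          if_neg h1, if_neg h2, zero_mul, add_zero]
  rw [Matrix.mul_apply]
  simp only [hrow]
  rw [Finset.sum_add_distrib, Finset.sum_ite_eq' _ a, Finset.sum_ite_eq' _ b,
    if_pos (Finset.mem_univ a), if_pos (Finset.mem_univ b)]
  have e1 := e1gen N i.val j.val hi hj hN
  have e2 := e2gen N i.val j.val hi hj hN
  have hij : (i = j) ↔ (i.val + N - j.val) % N = 0 := by
    have md := modfact N (i.val + N - j.val) (by omega)
    rw [Fin.ext_iff]
    constructor <;> intro h <;> omega
  rw [cycB, cycB]
  simp only [hav, hbv, e1, e2]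
  rw [← mul_add, cf_key N ((i.val + N - j.val) % N) h3 hN (Nat.mod_lt _ hNpos)]
  rw [Matrix.one_apply]
  by_cases h : i = j
  · rw [if_pos h, if_pos (hij.mp h)]; norm_num
  · rw [if_neg h, if_neg (fun hc => h (hij.mpr hc))]; norm_num

theorem inv_cycleH_mod4_3 (N : ℕ) (hmod : N % 4 = 3) (hN : 3 ≤ N) :
    IsUnit (cycleH N).det ∧
    ∀ j : Fin N, (cycleH N)⁻¹ j ⟨0, by omega⟩ =
      (1 / 2 : ℝ) * (if j.val % 4 = 0 then (-1) else if j.val % 4 = 1 then 1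
                     else if j.val % 4 = 2 then 1 else (-1)) := by
  have hmul := cyc_mul_eq_one N hmod hN
  constructor
  · exact Matrix.isUnit_det_of_right_inverse hmul
  · intro j
    rw [Matrix.inv_eq_right_inv hmul]
    have hj := j.isLt
    have e : (j.val + N - (⟨0, by omega⟩ : Fin N).val) % N = j.val := by
      have := modfact N (j.val + N - 0) (by omega)
      simp only [Fin.val_mk]
      omega
    rw [cycB]
    rw [e]
    rfl
end

section
/- Let N be even, α, β nonzero reals, and H_alt the N×N tridiagonal matrix with zero diagonal and off-diagonal entries alternating β, α, β, α, … (starting and ending with β). Then H_alt is invertible and for r ≥ s, the (r,s) entry of -H_alt^{-1} equals ((-1)^{(r+s-1)/2}/(4β))·(α/β)^{(r-s-1)/2}·(1-(-1)^s)·(1+(-1)^r), with the symmetric formula for r ≤ s. -/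
/-- The N×N bond-alternating Hückel matrix: tridiagonal with zero diagonal and
off-diagonal entries alternating β, α, β, α, … (starting with β). -/
def altH (N : ℕ) (α β : ℝ) : Matrix (Fin N) (Fin N) ℝ :=
  fun i j =>
    if i.val + 1 = j.val then (if Even i.val then β else α)
    else if j.val + 1 = i.val then (if Even j.val then β else α)
    else 0

/-- ℕ-indexed version of the matrix entries. -/
def altH' (α β : ℝ) (i j : ℕ) : ℝ :=
  if i + 1 = j then (if Even i then β else α)
  else if j + 1 = i then (if Even j then β else α)
  else 0

/-- Candidate Green's function (entries of -H⁻¹). -/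
noncomputable def gfun (α β : ℝ) (r s : ℕ) : ℝ :=
  if Even s ∧ ¬ Even r ∧ s ≤ r then
    (-1 : ℝ) ^ ((r + s + 1) / 2) * β⁻¹ * (α / β) ^ ((r - s - 1) / 2)
  else if Even r ∧ ¬ Even s ∧ r ≤ s then
    (-1 : ℝ) ^ ((r + s + 1) / 2) * β⁻¹ * (α / β) ^ ((s - r - 1) / 2)
  else 0

lemma gfun_eq_zero {α β : ℝ} {r s : ℕ}
    (h : ¬ ((s % 2 = 0 ∧ r % 2 = 1 ∧ s ≤ r) ∨ (r % 2 = 0 ∧ s % 2 = 1 ∧ r ≤ s))) :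
    gfun α β r s = 0 := by
  unfold gfun
  rw [if_neg, if_neg]
  · rintro ⟨h1, h2, h3⟩
    exact h (Or.inr ⟨Nat.even_iff.mp h1, Nat.not_even_iff.mp h2, h3⟩)
  · rintro ⟨h1, h2, h3⟩
    exact h (Or.inl ⟨Nat.even_iff.mp h1, Nat.not_even_iff.mp h2, h3⟩)

lemma gfun_of_odd_even {α β : ℝ} {r s : ℕ}
    (h1 : s % 2 = 0) (h2 : r % 2 = 1) (h3 : s ≤ r) :
    gfun α β r s = (-1 : ℝ) ^ ((r + s + 1) / 2) * β⁻¹ * (α / β) ^ ((r - s - 1) / 2) := by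
  unfold gfun
  rw [if_pos ⟨Nat.even_iff.mpr h1, Nat.not_even_iff.mpr h2, h3⟩]

lemma gfun_of_even_odd {α β : ℝ} {r s : ℕ}
    (h1 : r % 2 = 0) (h2 : s % 2 = 1) (h3 : r ≤ s) :
    gfun α β r s = (-1 : ℝ) ^ ((r + s + 1) / 2) * β⁻¹ * (α / β) ^ ((s - r - 1) / 2) := by
  unfold gfun
  rw [if_neg, if_pos ⟨Nat.even_iff.mpr h1, Nat.not_even_iff.mpr h2, h3⟩]
  rintro ⟨h1', h2', h3'⟩
  rw [Nat.even_iff] at h1'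
  omega

lemma altH'_succ (α β : ℝ) (i : ℕ) :
    altH' α β i (i + 1) = if Even i then β else α := by
  rw [altH', if_pos rfl]

/-- The key computation: the two-term sum (row i of H against column j of -gfun)
equals the identity matrix entry. -/
lemma key_sum (α β : ℝ) (hβ : β ≠ 0) {N i j : ℕ} (hN : N % 2 = 0)
    (hi : i < N) (hj : j < N) :
    (if i + 1 < N then altH' α β i (i + 1) * -(gfun α β (i + 1) j) else 0)
      + altH' α β i (i - 1) * -(gfun α β (i - 1) j)
      = if i = j then 1 else 0 := by
  rcases Nat.even_or_odd i with hEi | hEi <;> rcases Nat.even_or_odd j with hEj | hEj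
  · -- i even, j even
    obtain ⟨a, rfl⟩ := hEi
    obtain ⟨b, rfl⟩ := hEj
    rcases Nat.lt_trichotomy (a + a) (b + b) with hlt | heq | hgt
    · -- i < j : everything vanishes
      have g1 : gfun α β (a + a + 1) (b + b) = 0 := gfun_eq_zero (by omega)
      have g2 : gfun α β (a + a - 1) (b + b) = 0 := gfun_eq_zero (by omega)
      rw [if_neg (by omega : ¬ (a + a = b + b))]
      simp [g1, g2]
    · -- i = j : diagonal entry is 1
      obtain rfl : a = b := by omega
      have hlt1 : a + a + 1 < N := by omega
      rw [if_pos rfl, if_pos hlt1, altH'_succ, if_pos ⟨a, rfl⟩]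
      have g1 : gfun α β (a + a + 1) (a + a) =
          (-1 : ℝ) ^ ((a + a + 1 + (a + a) + 1) / 2) * β⁻¹
            * (α / β) ^ ((a + a + 1 - (a + a) - 1) / 2) :=
        gfun_of_odd_even (by omega) (by omega) (by omega)
      have g2 : gfun α β (a + a - 1) (a + a) = 0 := gfun_eq_zero (by omega)
      have e1 : (a + a + 1 + (a + a) + 1) / 2 = 2 * a + 1 := by omega
      have e2 : (a + a + 1 - (a + a) - 1) / 2 = 0 := by omega
      rw [g1, g2, e1, e2]
      have hp : (-1 : ℝ) ^ (2 * a + 1) = -1 := Odd.neg_one_pow ⟨a, by ring⟩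
      rw [hp]
      field_simp
      simp
    · -- i > j : cancellation
      have hlt1 : a + a + 1 < N := by omega
      rw [if_neg (by omega : ¬ (a + a = b + b)), if_pos hlt1, altH'_succ,
        if_pos ⟨a, rfl⟩]
      have h2 : altH' α β (a + a) (a + a - 1) = α := by
        rw [altH', if_neg (by omega), if_pos (by omega), if_neg]
        rw [Nat.even_iff]; omega
      rw [h2]
      have g1 : gfun α β (a + a + 1) (b + b) =
          (-1 : ℝ) ^ ((a + a + 1 + (b + b) + 1) / 2) * β⁻¹
            * (α / β) ^ ((a + a + 1 - (b + b) - 1) / 2) :=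
        gfun_of_odd_even (by omega) (by omega) (by omega)
      have g2 : gfun α β (a + a - 1) (b + b) =
          (-1 : ℝ) ^ ((a + a - 1 + (b + b) + 1) / 2) * β⁻¹
            * (α / β) ^ ((a + a - 1 - (b + b) - 1) / 2) :=
        gfun_of_odd_even (by omega) (by omega) (by omega)
      have e1 : (a + a + 1 + (b + b) + 1) / 2 = (a + b) + 1 := by omega
      have e2 : (a + a + 1 - (b + b) - 1) / 2 = (a - b - 1) + 1 := by omega
      have e3 : (a + a - 1 + (b + b) + 1) / 2 = a + b := by omega
      have e4 : (a + a - 1 - (b + b) - 1) / 2 = a - b - 1 := by omega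
      rw [g1, g2, e1, e2, e3, e4, pow_succ, pow_succ]
      field_simp
      ring
  · -- i even, j odd : both terms vanish
    obtain ⟨a, rfl⟩ := hEi
    obtain ⟨c, rfl⟩ := hEj
    have g1 : gfun α β (a + a + 1) (2 * c + 1) = 0 := gfun_eq_zero (by omega)
    have h2 : altH' α β (a + a) (a + a - 1) * -(gfun α β (a + a - 1) (2 * c + 1)) = 0 := by
      rcases Nat.eq_zero_or_pos a with rfl | ha
      · have hz : altH' α β (0 + 0) (0 + 0 - 1) = 0 := by
          rw [altH', if_neg (by omega), if_neg (by omega)]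
        rw [hz, zero_mul]
      · have g2 : gfun α β (a + a - 1) (2 * c + 1) = 0 := gfun_eq_zero (by omega)
        rw [g2, neg_zero, mul_zero]
    rw [if_neg (by omega : ¬ (a + a = 2 * c + 1)), h2]
    simp [g1]
  · -- i odd, j even : both terms vanish
    obtain ⟨a, rfl⟩ := hEi
    obtain ⟨b, rfl⟩ := hEj
    have g1 : gfun α β (2 * a + 1 + 1) (b + b) = 0 := gfun_eq_zero (by omega)
    have g2 : gfun α β (2 * a) (b + b) = 0 := gfun_eq_zero (by omega)
    rw [if_neg (by omega : ¬ (2 * a + 1 = b + b))]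
    simp [g1, g2]
  · -- i odd, j odd
    obtain ⟨a, rfl⟩ := hEi
    obtain ⟨c, rfl⟩ := hEj
    have hb : altH' α β (2 * a + 1) (2 * a + 1 - 1) = β := by
      rw [altH', if_neg (by omega), if_pos (by omega), if_pos]
      exact ⟨a, by omega⟩
    rcases Nat.lt_trichotomy (2 * a + 1) (2 * c + 1) with hlt | heq | hgt
    · -- i < j : cancellation
      have hlt1 : 2 * a + 1 + 1 < N := by omega
      rw [if_neg (by omega : ¬ (2 * a + 1 = 2 * c + 1)), if_pos hlt1,
        altH'_succ, if_neg (by rw [Nat.even_iff]; omega), hb]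
      have g1 : gfun α β (2 * a + 1 + 1) (2 * c + 1) =
          (-1 : ℝ) ^ ((2 * a + 1 + 1 + (2 * c + 1) + 1) / 2) * β⁻¹
            * (α / β) ^ ((2 * c + 1 - (2 * a + 1 + 1) - 1) / 2) :=
        gfun_of_even_odd (by omega) (by omega) (by omega)
      have g2 : gfun α β (2 * a + 1 - 1) (2 * c + 1) =
          (-1 : ℝ) ^ ((2 * a + 1 - 1 + (2 * c + 1) + 1) / 2) * β⁻¹
            * (α / β) ^ ((2 * c + 1 - (2 * a + 1 - 1) - 1) / 2) :=
        gfun_of_even_odd (by omega) (by omega) (by omega)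
      have e1 : (2 * a + 1 + 1 + (2 * c + 1) + 1) / 2 = (a + c + 1) + 1 := by omega
      have e2 : (2 * c + 1 - (2 * a + 1 + 1) - 1) / 2 = c - a - 1 := by omega
      have e3 : (2 * a + 1 - 1 + (2 * c + 1) + 1) / 2 = a + c + 1 := by omega
      have e4 : (2 * c + 1 - (2 * a + 1 - 1) - 1) / 2 = (c - a - 1) + 1 := by omega
      rw [g1, g2, e1, e2, e3, e4, pow_succ, pow_succ]
      field_simp
      have hb' : β * β⁻¹ = 1 := mul_inv_cancel₀ hβ
      linear_combination (α * α ^ (c - a - 1) * β⁻¹ ^ (c - a - 1) * (-1 : ℝ) ^ a * (-1 : ℝ) ^ c) * hb'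
    · -- i = j : diagonal entry is 1
      have g1 : gfun α β (2 * a + 1 + 1) (2 * c + 1) = 0 := gfun_eq_zero (by omega)
      have g2 : gfun α β (2 * a + 1 - 1) (2 * c + 1) =
          (-1 : ℝ) ^ ((2 * a + 1 - 1 + (2 * c + 1) + 1) / 2) * β⁻¹
            * (α / β) ^ ((2 * c + 1 - (2 * a + 1 - 1) - 1) / 2) :=
        gfun_of_even_odd (by omega) (by omega) (by omega)
      have e3 : (2 * a + 1 - 1 + (2 * c + 1) + 1) / 2 = 2 * c + 1 := by omega
      have e4 : (2 * c + 1 - (2 * a + 1 - 1) - 1) / 2 = 0 := by omega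
      rw [if_pos heq, hb, g2, e3, e4]
      have hp : (-1 : ℝ) ^ (2 * c + 1) = -1 := Odd.neg_one_pow ⟨c, by ring⟩
      rw [hp]
      simp [g1]
      field_simp
    · -- i > j : everything vanishes
      have g1 : gfun α β (2 * a + 1 + 1) (2 * c + 1) = 0 := gfun_eq_zero (by omega)
      have g2 : gfun α β (2 * a) (2 * c + 1) = 0 := gfun_eq_zero (by omega)
      rw [if_neg (by omega : ¬ (2 * a + 1 = 2 * c + 1))]
      simp [g1, g2]

/-- gfun matches the stated closed-form formula, for s ≤ r. -/
lemma gfun_formula (α β : ℝ) (hβ : β ≠ 0) {r s : ℕ} (h : s ≤ r) :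
    gfun α β r s =
      ((-1 : ℝ) ^ (((r + 1) + (s + 1) - 1) / 2) / (4 * β)) *
        (α / β) ^ (((r + 1) - (s + 1) - 1) / 2) *
        (1 - (-1 : ℝ) ^ (s + 1)) * (1 + (-1 : ℝ) ^ (r + 1)) := by
  rcases Nat.even_or_odd s with hEs | hEs
  · obtain ⟨b, rfl⟩ := hEs
    rcases Nat.even_or_odd r with hEr | hEr
    · -- r even : both sides 0
      obtain ⟨a, rfl⟩ := hEr
      have g0 : gfun α β (a + a) (b + b) = 0 := gfun_eq_zero (by omega)
      have hp : (-1 : ℝ) ^ (a + a + 1) = -1 := Odd.neg_one_pow ⟨a, by ring⟩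
      rw [g0, hp]
      ring
    · -- r odd, s even : the real case
      obtain ⟨a, rfl⟩ := hEr
      have g0 : gfun α β (2 * a + 1) (b + b) =
          (-1 : ℝ) ^ ((2 * a + 1 + (b + b) + 1) / 2) * β⁻¹
            * (α / β) ^ ((2 * a + 1 - (b + b) - 1) / 2) :=
        gfun_of_odd_even (by omega) (by omega) h
      have e1 : ((2 * a + 1 + 1) + (b + b + 1) - 1) / 2 = (2 * a + 1 + (b + b) + 1) / 2 := by
        omega
      have e2 : ((2 * a + 1 + 1) - (b + b + 1) - 1) / 2 = (2 * a + 1 - (b + b) - 1) / 2 := by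
        omega
      have hp1 : (-1 : ℝ) ^ (b + b + 1) = -1 := Odd.neg_one_pow ⟨b, by ring⟩
      have hp2 : (-1 : ℝ) ^ (2 * a + 1 + 1) = 1 := Even.neg_one_pow ⟨a + 1, by ring⟩
      rw [g0, e1, e2, hp1, hp2]
      field_simp
      ring
  · -- s odd : both sides 0
    obtain ⟨c, rfl⟩ := hEs
    have g0 : gfun α β r (2 * c + 1) = 0 := gfun_eq_zero (by omega)
    have hp : (-1 : ℝ) ^ (2 * c + 1 + 1) = 1 := Even.neg_one_pow ⟨c + 1, by ring⟩
    rw [g0, hp]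
    ring

/-- gfun is symmetric. -/
lemma gfun_symm (α β : ℝ) (r s : ℕ) : gfun α β r s = gfun α β s r := by
  unfold gfun
  by_cases h1 : Even s ∧ ¬ Even r ∧ s ≤ r <;> by_cases h2 : Even r ∧ ¬ Even s ∧ r ≤ s
  · exact absurd h1.1 h2.2.1
  · simp only [if_pos h1, if_neg h2, Nat.add_comm r s]
  · simp only [if_neg h1, if_pos h2, Nat.add_comm r s]
  · simp only [if_neg h1, if_neg h2]

theorem greens_function_altH (N : ℕ) (hN : Even N) (hpos : 0 < N)
    (α β : ℝ) (hα : α ≠ 0) (hβ : β ≠ 0) :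
    IsUnit (altH N α β).det ∧
    (∀ r s : Fin N, s.val ≤ r.val →
      -((altH N α β)⁻¹ r s) =
        ((-1 : ℝ) ^ (((r.val + 1) + (s.val + 1) - 1) / 2) / (4 * β)) *
          (α / β) ^ (((r.val + 1) - (s.val + 1) - 1) / 2) *
          (1 - (-1 : ℝ) ^ (s.val + 1)) * (1 + (-1 : ℝ) ^ (r.val + 1))) ∧
    (∀ r s : Fin N, r.val ≤ s.val →
      -((altH N α β)⁻¹ r s) =
        ((-1 : ℝ) ^ (((r.val + 1) + (s.val + 1) - 1) / 2) / (4 * β)) *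
          (α / β) ^ (((s.val + 1) - (r.val + 1) - 1) / 2) *
          (1 - (-1 : ℝ) ^ (r.val + 1)) * (1 + (-1 : ℝ) ^ (s.val + 1))) := by
  have hN2 : N % 2 = 0 := Nat.even_iff.mp hN
  set M : Matrix (Fin N) (Fin N) ℝ :=
    Matrix.of (fun i j : Fin N => -(gfun α β i.val j.val)) with hM
  have hmul : altH N α β * M = 1 := by
    ext i j
    rw [Matrix.mul_apply, Matrix.one_apply]
    set F : ℕ → ℝ := fun k => altH' α β i.val k * -(gfun α β k j.val) with hF
    have hsum : (∑ k : Fin N, altH N α β i k * M k j) = ∑ k ∈ Finset.range N, F k :=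
      Fin.sum_univ_eq_sum_range F N
    rw [hsum]
    have hpt : ∀ k ∈ Finset.range N, F k =
        (if k = i.val + 1 then F k else 0) + (if k = i.val - 1 then F k else 0) := by
      intro k _
      rcases eq_or_ne k (i.val + 1) with h1 | h1
      · rw [if_pos h1, if_neg (by omega)]; ring
      · rcases eq_or_ne k (i.val - 1) with h2 | h2
        · rw [if_neg h1, if_pos h2]; ring
        · rw [if_neg h1, if_neg h2]
          have hz : altH' α β i.val k = 0 := by
            rw [altH', if_neg (by omega), if_neg (by omega)]
          simp only [hF, hz, zero_mul, add_zero]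
    rw [Finset.sum_congr rfl hpt, Finset.sum_add_distrib,
      Finset.sum_ite_eq' (Finset.range N) (i.val + 1) F,
      Finset.sum_ite_eq' (Finset.range N) (i.val - 1) F]
    have hmem : i.val - 1 ∈ Finset.range N := Finset.mem_range.mpr (by omega)
    rw [if_pos hmem]
    have := key_sum α β hβ (N := N) (i := i.val) (j := j.val) hN2 i.isLt j.isLt
    simp only [Finset.mem_range]
    rw [show (if i = j then (1:ℝ) else 0) = (if i.val = j.val then (1:ℝ) else 0) by
      rcases eq_or_ne i j with h | h
      · rw [if_pos h, if_pos (congrArg Fin.val h)]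
      · rw [if_neg h, if_neg (fun hv => h (Fin.ext hv))]]
    rw [← this]
  have hdet : IsUnit (altH N α β).det := Matrix.isUnit_det_of_right_inverse hmul
  have hinv : (altH N α β)⁻¹ = M := Matrix.inv_eq_right_inv hmul
  refine ⟨hdet, ?_, ?_⟩
  · intro r s hle
    rw [hinv]
    show -(-(gfun α β r.val s.val)) = _
    rw [neg_neg]
    exact gfun_formula α β hβ hle
  · intro r s hle
    rw [hinv]
    show -(-(gfun α β r.val s.val)) = _
    rw [neg_neg, gfun_symm]
    have := gfun_formula α β hβ (r := s.val) (s := r.val) hle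
    rw [this]
    have e : ((s.val + 1) + (r.val + 1) - 1) / 2 = ((r.val + 1) + (s.val + 1) - 1) / 2 := by
      omega
    rw [e]
end
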